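/- Lemma (paper Lemma 6.9, mod p conjugate filtration via elementary divisors). In the situation of the context, fix a 𝔖̄-basis (e_1, …, e_d) of M̄ and let A ∈ M_d(k[[u]]) be the matrix with φ_{M̄}(e_j) = ∑_i A_{ij} e_i. Since k[[u]] is a discrete valuation ring, A admits a decomposition A = X · diag(u^{a_1}, …, u^{a_d}) · Y with X, Y ∈ GL_d(k[[u]]) and integers 0 ≤ a_1 ≤ … ≤ a_d (the a_i depend only on M̄, being its elementary divisor exponents). Then for every n ≥ 0: dim_k (Fil_n M̄_HT / Fil_{n−1} M̄_HT) = #{i : a_i = n}. -/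

import Mathlib

/-!
Statement 10 (paper Lemma 6.9): mod `p` conjugate filtration via elementary divisors.

Context: `k` a perfect field of characteristic `p`, `𝔖̄ = k[[u]]` with the
endomorphism `φ` determined by `φ(∑ aᵢ uⁱ) = ∑ aᵢᵖ u^{ip}` (characterized below on
coefficients), and a mod `p` Breuil--Kisin module `(M̄, φ_{M̄})`: `M̄` finite free of
rank `d` (with basis `bM`), `φ_{M̄}` a `φ`-semilinear map whose linearization is
injective (⟺ `LinearIndependent` of `φ_{M̄} ∘ bM`) with cokernel killed by `u^h`.
The auxiliary `Module k M̄`/`IsScalarTower` instances encode the (canonical)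
`k`-structure used to measure `k`-dimensions.
-/

open Submodule

noncomputable section

namespace ModPBK

variable {p : ℕ} [Fact p.Prime] {k : Type*} [Field k] [CharP k p]
variable {Mb : Type*} [AddCommGroup Mb] [Module (PowerSeries k) Mb]
variable [Module k Mb] [IsScalarTower k (PowerSeries k) Mb]

/-- `u^i M̄` as a submodule of `M̄`. -/
def uPowSub (i : ℕ) : Submodule (PowerSeries k) Mb :=
  LinearMap.range ((PowerSeries.X ^ i : PowerSeries k) •
    (LinearMap.id : Mb →ₗ[PowerSeries k] Mb))

variable {φ : PowerSeries k →+* PowerSeries k}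

/-- `M̄*`, the `𝔖̄`-submodule generated by the image of `φ_{M̄}`. -/
def star (φM : Mb →ₛₗ[φ] Mb) : Submodule (PowerSeries k) Mb :=
  Submodule.span (PowerSeries k) (Set.range φM)

/-- The conjugate filtration on `M̄_HT = M̄/uM̄`: the image of `{y | uⁿ y ∈ M̄*}`. -/
def filHT (φM : Mb →ₛₗ[φ] Mb) (n : ℕ) :
    Submodule (PowerSeries k) (Mb ⧸ (uPowSub 1 : Submodule (PowerSeries k) Mb)) :=
  Submodule.map (uPowSub 1 : Submodule (PowerSeries k) Mb).mkQ
    (Submodule.comap ((PowerSeries.X ^ n : PowerSeries k) •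
      (LinearMap.id : Mb →ₗ[PowerSeries k] Mb)) (star φM))

/-- `gr_n M̄_HT = Fil_n M̄_HT / Fil_{n-1} M̄_HT` as a `k`-vector space
(`Fil_{-1} = 0`). -/
abbrev grHTk (φM : Mb →ₛₗ[φ] Mb) (n : ℕ) :=
  ↥(Submodule.restrictScalars k (filHT φM n)) ⧸
    Submodule.comap (Submodule.restrictScalars k (filHT φM n)).subtype
      (Submodule.restrictScalars k (if n = 0 then ⊥ else filHT φM (n - 1)))

end ModPBK

open ModPBK

section Helpers

variable {k : Type*} [Field k]
variable {Mb : Type*} [AddCommGroup Mb] [Module (PowerSeries k) Mb]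

lemma ModPBK.mem_uPowSub_one (m : Mb) :
    (PowerSeries.X : PowerSeries k) • m ∈ (uPowSub 1 : Submodule (PowerSeries k) Mb) :=
  ⟨m, by simp⟩

lemma ModPBK.X_smul_mk (m : Mb) :
    (PowerSeries.X : PowerSeries k) •
      ((uPowSub 1 : Submodule (PowerSeries k) Mb).mkQ m) = 0 := by
  rw [← map_smul, Submodule.mkQ_apply, Submodule.Quotient.mk_eq_zero]
  exact mem_uPowSub_one m

variable [Module k Mb] [IsScalarTower k (PowerSeries k) Mb]

lemma ModPBK.quot_smul (c : PowerSeries k)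
    (q : Mb ⧸ (uPowSub 1 : Submodule (PowerSeries k) Mb)) :
    c • q = (PowerSeries.constantCoeff c) • q := by
  obtain ⟨m, rfl⟩ := Submodule.Quotient.mk_surjective _ q
  obtain ⟨c', hc'⟩ : (PowerSeries.X : PowerSeries k) ∣
      (c - PowerSeries.C (PowerSeries.constantCoeff c)) := by
    rw [PowerSeries.X_dvd_iff]; simp
  have h1 : c = PowerSeries.C (PowerSeries.constantCoeff c) + PowerSeries.X * c' := by
    rw [← hc']; ring
  have h2 : (PowerSeries.constantCoeff c) •
      (Submodule.Quotient.mk m : Mb ⧸ (uPowSub 1 : Submodule (PowerSeries k) Mb))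
      = (PowerSeries.C (PowerSeries.constantCoeff c)) • Submodule.Quotient.mk m := by
    rw [← algebraMap_smul (PowerSeries k) (PowerSeries.constantCoeff c)
      (Submodule.Quotient.mk m : Mb ⧸ (uPowSub 1 : Submodule (PowerSeries k) Mb))]
    simp [PowerSeries.algebraMap_apply]
  rw [h2]
  conv_lhs => rw [h1]
  rw [add_smul, mul_comm, mul_smul]
  have h3 : (PowerSeries.X : PowerSeries k) •
      (Submodule.Quotient.mk m : Mb ⧸ (uPowSub 1 : Submodule (PowerSeries k) Mb)) = 0 := by
    rw [← Submodule.mkQ_apply]; exact X_smul_mk m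
  rw [h3, smul_zero, add_zero]

lemma ModPBK.restrict_span (s : Set (Mb ⧸ (uPowSub 1 : Submodule (PowerSeries k) Mb))) :
    Submodule.restrictScalars k (Submodule.span (PowerSeries k) s) = Submodule.span k s := by
  apply le_antisymm
  · intro x hx
    rw [Submodule.restrictScalars_mem] at hx
    induction hx using Submodule.span_induction with
    | mem x hx => exact Submodule.subset_span hx
    | zero => exact Submodule.zero_mem _
    | add x y _ _ hx hy => exact Submodule.add_mem _ hx hy
    | smul c x _ hx => rw [quot_smul]; exact Submodule.smul_mem _ _ hx
  · rw [Submodule.span_le]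
    intro x hx
    rw [SetLike.mem_coe, Submodule.restrictScalars_mem]
    exact Submodule.subset_span hx

omit [Module k Mb] [IsScalarTower k (PowerSeries k) Mb] in
lemma ModPBK.mem_span_smul_basis {d : ℕ} (f : Module.Basis (Fin d) (PowerSeries k) Mb)
    (c : Fin d → PowerSeries k) (m : Mb) :
    m ∈ Submodule.span (PowerSeries k) (Set.range fun i => c i • f i) ↔
      ∀ i, c i ∣ f.repr m i := by
  constructor
  · intro hm
    induction hm using Submodule.span_induction with
    | mem x hx =>
        obtain ⟨j, rfl⟩ := hx
        intro i
        rw [map_smul]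
        by_cases hij : i = j
        · subst hij; simp
        · simp [Module.Basis.repr_self, Finsupp.single_apply, Ne.symm hij]
    | zero => simp
    | add x y _ _ hx hy => intro i; rw [map_add]; exact dvd_add (hx i) (hy i)
    | smul r x _ hx =>
        intro i
        rw [map_smul, Finsupp.smul_apply, smul_eq_mul]
        exact (hx i).mul_left r
  · intro hm
    choose e he using hm
    have hmeq : m = ∑ i, e i • (c i • f i) := by
      conv_lhs => rw [← f.sum_repr m]
      refine Finset.sum_congr rfl fun i _ => ?_
      rw [he i, mul_comm, mul_smul]
    rw [hmeq]
    exact Submodule.sum_mem _ fun i _ =>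
      Submodule.smul_mem _ _ (Submodule.subset_span ⟨i, rfl⟩)

end Helpers

set_option maxHeartbeats 2000000 in
theorem modp_conjugate_filtration_elementary_divisors
    {p : ℕ} [Fact p.Prime] {k : Type*} [Field k] [CharP k p]
    [ExpChar k p] [PerfectRing k p]
    -- the Frobenius `φ` of `k[[u]]`, `∑ aᵢ uⁱ ↦ ∑ aᵢᵖ u^{ip}`
    (φ : PowerSeries k →+* PowerSeries k)
    (hφ : ∀ (f : PowerSeries k) (n : ℕ),
      PowerSeries.coeff (p * n) (φ f) = (PowerSeries.coeff n f) ^ p)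
    (hφ' : ∀ (f : PowerSeries k) (m : ℕ), ¬ p ∣ m → PowerSeries.coeff m (φ f) = 0)
    -- the mod `p` Breuil--Kisin module
    {Mb : Type*} [AddCommGroup Mb] [Module (PowerSeries k) Mb]
    [Module k Mb] [IsScalarTower k (PowerSeries k) Mb]
    (d : ℕ) (bM : Module.Basis (Fin d) (PowerSeries k) Mb)
    (φM : Mb →ₛₗ[φ] Mb)
    (hinj : LinearIndependent (PowerSeries k) fun i => φM (bM i))
    (h : ℕ)
    (hcoker : ∀ m : Mb, (PowerSeries.X ^ h : PowerSeries k) • m ∈ star φM)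
    -- the matrix `A` of `φ_{M̄}` in the basis `bM` and a decomposition
    -- `A = X · diag(u^{a_1}, …, u^{a_d}) · Y` with `X, Y ∈ GL_d(k[[u]])`,
    -- `0 ≤ a_1 ≤ … ≤ a_d`
    (A : Matrix (Fin d) (Fin d) (PowerSeries k))
    (hA : ∀ j, φM (bM j) = ∑ i, A i j • bM i)
    (X Y : Matrix (Fin d) (Fin d) (PowerSeries k))
    (hX : IsUnit X) (hY : IsUnit Y)
    (a : Fin d → ℕ) (ha : Monotone a)
    (hdec : A = X * Matrix.diagonal (fun i => (PowerSeries.X : PowerSeries k) ^ a i) * Y) :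
    -- `dim_k (Fil_n M̄_HT / Fil_{n-1} M̄_HT) = #{i : a_i = n}`
    ∀ n : ℕ, Module.finrank k (grHTk φM n)
      = (Finset.univ.filter (fun i : Fin d => a i = n)).card := by
  classical
  obtain ⟨𝒳, rfl⟩ := hX
  obtain ⟨𝒴, rfl⟩ := hY
  set u : PowerSeries k := PowerSeries.X with hu
  set D : Matrix (Fin d) (Fin d) (PowerSeries k) :=
    Matrix.diagonal (fun i => u ^ a i) with hD
  set X' : Matrix (Fin d) (Fin d) (PowerSeries k) :=
    ((𝒳 : (Matrix (Fin d) (Fin d) (PowerSeries k))ˣ) :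
      Matrix (Fin d) (Fin d) (PowerSeries k)) with hX'
  set Y' : Matrix (Fin d) (Fin d) (PowerSeries k) :=
    ((𝒴 : (Matrix (Fin d) (Fin d) (PowerSeries k))ˣ) :
      Matrix (Fin d) (Fin d) (PowerSeries k)) with hY'
  set Xi : Matrix (Fin d) (Fin d) (PowerSeries k) :=
    ((𝒳⁻¹ : (Matrix (Fin d) (Fin d) (PowerSeries k))ˣ) :
      Matrix (Fin d) (Fin d) (PowerSeries k)) with hXi
  set Yi : Matrix (Fin d) (Fin d) (PowerSeries k) :=
    ((𝒴⁻¹ : (Matrix (Fin d) (Fin d) (PowerSeries k))ˣ) :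
      Matrix (Fin d) (Fin d) (PowerSeries k)) with hYi
  have hXXi : X' * Xi = 1 := Units.mul_inv 𝒳
  have hXiX : Xi * X' = 1 := Units.inv_mul 𝒳
  have hYYi : Y' * Yi = 1 := Units.mul_inv 𝒴
  let e : Mb ≃ₗ[PowerSeries k] Mb :=
    LinearEquiv.ofLinear (Matrix.toLin bM bM X') (Matrix.toLin bM bM Xi)
      (by rw [← Matrix.toLin_mul, hXXi, Matrix.toLin_one])
      (by rw [← Matrix.toLin_mul, hXiX, Matrix.toLin_one])
  set f : Module.Basis (Fin d) (PowerSeries k) Mb := bM.map e with hfdef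
  have hf : ∀ j, f j = ∑ i, X' i j • bM i := by
    intro j
    simp only [hfdef, Module.Basis.map_apply, e, LinearEquiv.ofLinear_apply]
    exact Matrix.toLin_self bM bM _ j
  -- the generators `u^{a i} • f i`
  have hw : ∀ j, (u ^ a j) • f j = ∑ l, ((X' * D) l j) • bM l := by
    intro j
    rw [hf, Finset.smul_sum]
    refine Finset.sum_congr rfl fun l _ => ?_
    rw [smul_smul, Matrix.mul_diagonal, mul_comm]
  have hcol : ∀ j, φM (bM j) = ∑ l, (Y' l j) • ((u ^ a l) • f l) := by
    intro j
    rw [hA j, hdec]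
    calc (∑ i, ((X' * D * Y') i j) • bM i)
        = ∑ i, ∑ l, ((X' * D) i l * Y' l j) • bM i := by
          refine Finset.sum_congr rfl fun i _ => ?_
          rw [Matrix.mul_apply, Finset.sum_smul]
      _ = ∑ l, ∑ i, ((X' * D) i l * Y' l j) • bM i := by
          exact Finset.sum_comm
      _ = ∑ l, (Y' l j) • ((u ^ a l) • f l) := by
          refine Finset.sum_congr rfl fun l _ => ?_
          rw [hw l, Finset.smul_sum]
          refine Finset.sum_congr rfl fun i _ => ?_
          rw [smul_smul, mul_comm]
  have hwcol : ∀ l, (u ^ a l) • f l = ∑ j, (Yi j l) • φM (bM j) := by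
    intro l
    have key : ∑ j, (Yi j l) • φM (bM j)
        = ∑ m, ((Y' * Yi) m l) • ((u ^ a m) • f m) := by
      calc ∑ j, (Yi j l) • φM (bM j)
          = ∑ j, ∑ m, (Y' m j * Yi j l) • ((u ^ a m) • f m) := by
            refine Finset.sum_congr rfl fun j _ => ?_
            rw [hcol j, Finset.smul_sum]
            refine Finset.sum_congr rfl fun m _ => ?_
            rw [smul_smul, mul_comm]
        _ = ∑ m, ∑ j, (Y' m j * Yi j l) • ((u ^ a m) • f m) := by
            exact Finset.sum_comm
        _ = ∑ m, ((Y' * Yi) m l) • ((u ^ a m) • f m) := by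
            refine Finset.sum_congr rfl fun m _ => ?_
            rw [Matrix.mul_apply, Finset.sum_smul]
    rw [key, hYYi]
    rw [Finset.sum_eq_single l (fun m _ hml => by
        rw [Matrix.one_apply_ne hml, zero_smul])
      (fun hnl => absurd (Finset.mem_univ l) hnl)]
    rw [Matrix.one_apply_eq, one_smul]
  -- star is the span of the `u^{a i} • f i`
  have hstar : star φM
      = Submodule.span (PowerSeries k) (Set.range fun i => (u ^ a i) • f i) := by
    apply le_antisymm
    · rw [ModPBK.star, Submodule.span_le]
      rintro x ⟨m, rfl⟩
      have hmrep : φM m = ∑ j, φ (bM.repr m j) • φM (bM j) := by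
        conv_lhs => rw [← bM.sum_repr m]
        rw [map_sum]
        exact Finset.sum_congr rfl fun j _ => φM.map_smulₛₗ _ _
      rw [SetLike.mem_coe, hmrep]
      refine Submodule.sum_mem _ fun j _ => Submodule.smul_mem _ _ ?_
      rw [hcol j]
      exact Submodule.sum_mem _ fun l _ =>
        Submodule.smul_mem _ _ (Submodule.subset_span ⟨l, rfl⟩)
    · rw [Submodule.span_le]
      rintro x ⟨l, rfl⟩
      simp only [SetLike.mem_coe]
      show (u ^ a l) • f l ∈ star φM
      rw [hwcol l]
      exact Submodule.sum_mem _ fun j _ => Submodule.smul_mem _ _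
        (Submodule.subset_span (Set.mem_range_self _))
  -- membership criterion
  have hmem : ∀ (m : Mb), m ∈ star φM ↔ ∀ i, u ^ a i ∣ f.repr m i := by
    intro m; rw [hstar]; exact mem_span_smul_basis f _ m
  -- description of the conjugate filtration
  have hfil : ∀ n : ℕ, filHT φM n = Submodule.span (PowerSeries k)
      ((fun i => (uPowSub 1 : Submodule (PowerSeries k) Mb).mkQ (f i)) '' {i | a i ≤ n}) := by
    intro n
    apply le_antisymm
    · rintro q ⟨m, hm, rfl⟩
      rw [SetLike.mem_coe, Submodule.mem_comap, LinearMap.smul_apply,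
        LinearMap.id_apply, hmem] at hm
      have hq : (uPowSub 1 : Submodule (PowerSeries k) Mb).mkQ m
          = ∑ i, f.repr m i • (uPowSub 1 : Submodule (PowerSeries k) Mb).mkQ (f i) := by
        conv_lhs => rw [← f.sum_repr m]
        rw [map_sum]
        exact Finset.sum_congr rfl fun i _ => by rw [map_smul]
      rw [hq]
      refine Submodule.sum_mem _ fun i _ => ?_
      by_cases hi : a i ≤ n
      · exact Submodule.smul_mem _ _ (Submodule.subset_span ⟨i, hi, rfl⟩)
      · -- the coefficient is divisible by X, so the term vanishes
        have hdvd := hm i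
        rw [map_smul, Finsupp.smul_apply, smul_eq_mul] at hdvd
        have hXdvd : u ∣ f.repr m i := by
          have h1 : u ^ n * (u * u ^ (a i - n - 1)) ∣ u ^ n * f.repr m i := by
            have heq : u ^ a i = u ^ n * (u * u ^ (a i - n - 1)) := by
              rw [← pow_succ', ← pow_add]
              congr 1
              omega
            rwa [heq] at hdvd
          have h2 : u * u ^ (a i - n - 1) ∣ f.repr m i :=
            (mul_dvd_mul_iff_left (pow_ne_zero n PowerSeries.X_ne_zero)).mp h1
          exact dvd_trans (Dvd.intro _ rfl) h2
        obtain ⟨c, hc⟩ := hXdvd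
        rw [hc, mul_comm, mul_smul, hu, X_smul_mk, smul_zero]
        exact Submodule.zero_mem _
    · rw [Submodule.span_le]
      rintro q ⟨i, hi, rfl⟩
      rw [SetLike.mem_coe, filHT]
      refine ⟨f i, ?_, rfl⟩
      rw [SetLike.mem_coe, Submodule.mem_comap, LinearMap.smul_apply,
        LinearMap.id_apply, hmem]
      intro j
      rw [map_smul, Finsupp.smul_apply, smul_eq_mul, Module.Basis.repr_self, Finsupp.single_apply]
      by_cases hji : j = i
      · subst hji
        rw [if_pos rfl, mul_one]
        exact pow_dvd_pow u hi
      · rw [if_neg (fun hh => hji hh.symm), mul_zero]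
        exact dvd_zero _
  -- the k-structure of the filtration
  have hres : ∀ n : ℕ, Submodule.restrictScalars k (filHT φM n)
      = Submodule.span k
        ((fun i => (uPowSub 1 : Submodule (PowerSeries k) Mb).mkQ (f i)) '' {i | a i ≤ n}) := by
    intro n; rw [hfil n, restrict_span]
  -- linear independence of the images of the basis
  have hli : LinearIndependent k
      (fun i : Fin d => (uPowSub 1 : Submodule (PowerSeries k) Mb).mkQ (f i)) := by
    rw [Fintype.linearIndependent_iff]
    intro g hg i
    have h0 : (uPowSub 1 : Submodule (PowerSeries k) Mb).mkQ
        (∑ j, (PowerSeries.C (g j)) • f j) = 0 := by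
      rw [map_sum]
      rw [← hg]
      refine Finset.sum_congr rfl fun j _ => ?_
      rw [map_smul, quot_smul]
      simp
    rw [Submodule.mkQ_apply, Submodule.Quotient.mk_eq_zero] at h0
    obtain ⟨m, hm⟩ := h0
    simp only [LinearMap.smul_apply, LinearMap.id_apply, pow_one] at hm
    have hrep := congrArg (fun z => f.repr z i) hm
    simp only [map_smul, map_sum, Finsupp.smul_apply, smul_eq_mul, Finset.sum_apply',
      Module.Basis.repr_self] at hrep
    rw [Finset.sum_eq_single i (fun j _ hji => by
        rw [Finsupp.single_apply, if_neg hji, mul_zero])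
      (fun hni => absurd (Finset.mem_univ i) hni)] at hrep
    rw [Finsupp.single_apply, if_pos rfl, mul_one] at hrep
    have hcc := congrArg (PowerSeries.constantCoeff) hrep
    simpa using hcc.symm
  -- dimension of the spans
  have hdim : ∀ n : ℕ, Module.finrank k (Submodule.span k
      ((fun i => (uPowSub 1 : Submodule (PowerSeries k) Mb).mkQ (f i)) '' {i | a i ≤ n}))
      = (Finset.univ.filter fun i : Fin d => a i ≤ n).card := by
    intro n
    have hsub : LinearIndependent k
        (fun i : {i : Fin d | a i ≤ n} =>
          (uPowSub 1 : Submodule (PowerSeries k) Mb).mkQ (f i.1)) :=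
      hli.comp _ Subtype.val_injective
    rw [Set.image_eq_range, finrank_span_eq_card hsub]
    simp [Set.coe_setOf, Fintype.card_subtype]
  have hfr : ∀ m : ℕ, Module.finrank k (Submodule.restrictScalars k (filHT φM m))
      = (Finset.univ.filter fun i : Fin d => a i ≤ m).card := by
    intro m; rw [hres m]; exact hdim m
  have hfd : ∀ m : ℕ, FiniteDimensional k (Submodule.restrictScalars k (filHT φM m)) := by
    intro m
    rw [hres m]
    exact FiniteDimensional.span_of_finite k ((Set.toFinite _).image _)
  intro n
  by_cases hn : n = 0
  · subst hn
    have hW : (Submodule.comap (Submodule.restrictScalars k (filHT φM 0)).subtype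
        (Submodule.restrictScalars k (if (0 : ℕ) = 0 then ⊥ else filHT φM (0 - 1)))) = ⊥ := by
      rw [if_pos rfl]
      simp [Submodule.comap_bot, Submodule.ker_subtype]
    rw [show Module.finrank k (grHTk φM 0)
        = Module.finrank k (Submodule.restrictScalars k (filHT φM 0)) from
      LinearEquiv.finrank_eq (Submodule.quotEquivOfEqBot _ hW)]
    rw [hfr 0]
    congr 1
    apply Finset.filter_congr
    intro i _
    simp [Nat.le_zero]
  · have hle : Submodule.restrictScalars k (filHT φM (n - 1))
        ≤ Submodule.restrictScalars k (filHT φM n) := by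
      rw [hres, hres]
      apply Submodule.span_mono
      apply Set.image_mono
      intro i hi
      exact le_trans hi (Nat.sub_le n 1)
    haveI := hfd n
    have h1 := Submodule.finrank_quotient_add_finrank
      (Submodule.comap (Submodule.restrictScalars k (filHT φM n)).subtype
        (Submodule.restrictScalars k (filHT φM (n - 1))))
    have h2 : Module.finrank k (Submodule.comap
        (Submodule.restrictScalars k (filHT φM n)).subtype
        (Submodule.restrictScalars k (filHT φM (n - 1))))
        = Module.finrank k (Submodule.restrictScalars k (filHT φM (n - 1))) :=
      LinearEquiv.finrank_eq (Submodule.comapSubtypeEquivOfLe hle)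
    have hcard : (Finset.univ.filter fun i : Fin d => a i ≤ n).card
        = (Finset.univ.filter fun i : Fin d => a i ≤ n - 1).card
          + (Finset.univ.filter fun i : Fin d => a i = n).card := by
      rw [← Finset.card_union_of_disjoint (by
        rw [Finset.disjoint_filter]
        intro i _ hle1 heq
        omega)]
      congr 1
      rw [← Finset.filter_or]
      apply Finset.filter_congr
      intro i _
      constructor
      · intro hh; omega
      · intro hh; omega
    have hgoal : Module.finrank k (grHTk φM n)
        = Module.finrank k (Submodule.restrictScalars k (filHT φM n) ⧸
            Submodule.comap (Submodule.restrictScalars k (filHT φM n)).subtype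
              (Submodule.restrictScalars k (filHT φM (n - 1)))) := by
      unfold grHTk
      rw [if_neg hn]
    rw [hgoal]
    rw [hfr n, hfr (n - 1)] at *
    omega
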